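/- If ζ : ℝ → [0,∞) is continuous and ∫₀^∞ t^{n-1} ζ(t) dt = ∞, then there exists a convex, super-coercive function u : ℝⁿ → ℝ such that ∫_{ℝⁿ} ζ(u(x)) dx = ∞. -/

import Mathlib

open MeasureTheory Filter Set Metric
open scoped ENNReal NNReal

section Helpers

lemma lint_affine {s c : ℝ} (hs : 0 < s) {G : ℝ → ℝ≥0∞} (hG : Measurable G) (A B : ℝ) :
    ∫⁻ t in Set.Ioo (s*A+c) (s*B+c), G t
      = ENNReal.ofReal s * ∫⁻ r in Set.Ioo A B, G (s*r+c) := by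
  have hφ : Measurable fun r : ℝ => s * r + c := by fun_prop
  have hmap : Measure.map (fun r : ℝ => s * r + c) volume
      = ENNReal.ofReal s⁻¹ • volume := by
    have h1 : (fun r : ℝ => s * r + c) = (fun x : ℝ => x + c) ∘ (fun r => s * r) := rfl
    rw [h1, ← Measure.map_map (by fun_prop) (by fun_prop),
      Real.map_volume_mul_left hs.ne', Measure.map_smul,
      map_add_right_eq_self volume c, abs_of_pos (inv_pos.2 hs)]
  have hvol : (volume : Measure ℝ)
      = ENNReal.ofReal s • Measure.map (fun r : ℝ => s * r + c) volume := by
    rw [hmap, smul_smul, ← ENNReal.ofReal_mul hs.le, mul_inv_cancel₀ hs.ne',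
      ENNReal.ofReal_one, one_smul]
  have hpre : (fun r : ℝ => s*r+c) ⁻¹' Set.Ioo (s*A+c) (s*B+c) = Set.Ioo A B := by
    ext r
    simp only [Set.mem_preimage, Set.mem_Ioo, add_lt_add_iff_right, mul_lt_mul_iff_right₀ hs]
  conv_lhs => rw [hvol]
  rw [Measure.restrict_smul, lintegral_smul_measure,
    setLIntegral_map measurableSet_Ioo hG hφ, hpre, smul_eq_mul]

local notation "dim" => Module.finrank ℝ

lemma lintegral_norm_polar {E : Type*} [NormedAddCommGroup E] [NormedSpace ℝ E]
    [MeasurableSpace E] [BorelSpace E] [Nontrivial E] [FiniteDimensional ℝ E]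
    (μ : Measure E) [μ.IsAddHaarMeasure] {g : ℝ → ℝ≥0∞} (hg : Measurable g) :
    ∫⁻ x, g ‖x‖ ∂μ
      = μ.toSphere Set.univ
          * ∫⁻ r in Set.Ioi (0:ℝ), ENNReal.ofReal (r ^ (dim E - 1)) * g r := by
  have h0 : ∫⁻ x, g ‖x‖ ∂μ = ∫⁻ x : ({(0:E)}ᶜ : Set E), g ‖(x:E)‖ ∂(μ.comap (↑)) := by
    rw [lintegral_subtype_comap (measurableSet_singleton (0:E)).compl (fun x => g ‖x‖),
      MeasureTheory.restrict_compl_singleton]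
  rw [h0]
  have hpres := μ.measurePreserving_homeomorphUnitSphereProd
  have hmeas : Measurable fun p : sphere (0:E) 1 × Set.Ioi (0:ℝ) => g p.2 :=
    hg.comp (measurable_subtype_coe.comp measurable_snd)
  have h1 : ∫⁻ x : ({(0:E)}ᶜ : Set E), g ‖(x:E)‖ ∂(μ.comap (↑))
      = ∫⁻ p : sphere (0:E) 1 × Set.Ioi (0:ℝ), g p.2
          ∂(μ.toSphere.prod (.volumeIoiPow (dim E - 1))) :=
    by rw [← hpres.lintegral_comp hmeas]; simp only [homeomorphUnitSphereProd_apply_snd_coe]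
  rw [h1, lintegral_prod _ hmeas.aemeasurable]
  simp only [lintegral_const]
  rw [mul_comm]
  congr 1
  have h2 := lintegral_withDensity_eq_lintegral_mul
    (Measure.comap (Subtype.val) (volume : Measure ℝ))
    (f := fun r : Set.Ioi (0:ℝ) => ENNReal.ofReal (r.1 ^ (dim E - 1)))
    (by fun_prop)
    (g := fun y : Set.Ioi (0:ℝ) => g y.1) (hg.comp measurable_subtype_coe)
  rw [Measure.volumeIoiPow, h2]
  exact lintegral_subtype_comap measurableSet_Ioi
    (fun r => ENNReal.ofReal (r ^ (dim E - 1)) * g r)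

lemma exists_step {h : ℝ → ℝ} (hc : Continuous h) (hnn : ∀ t, 0 < t → 0 ≤ h t)
    {a : ℝ} (ha : 0 ≤ a)
    (htop : ∫⁻ t in Set.Ioi (0:ℝ), ENNReal.ofReal (h t) = ⊤)
    (M : ℝ) (gap : ℝ) :
    ∃ c, a + gap ≤ c ∧
      ENNReal.ofReal M ≤ ∫⁻ t in Set.Ioo a c, ENNReal.ofReal (h t) := by
  set ν : Measure ℝ := volume.withDensity (fun t => ENNReal.ofReal (h t)) with hν
  have happ : ∀ s : Set ℝ, MeasurableSet s → ν s = ∫⁻ t in s, ENNReal.ofReal (h t) :=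
    fun s hs => withDensity_apply _ hs
  have hfin : ν (Set.Ioc 0 a) < ⊤ := by
    rw [happ _ measurableSet_Ioc]
    have hint : IntegrableOn h (Set.Ioc 0 a) := hc.integrableOn_Ioc
    exact (hasFiniteIntegral_iff_ofReal
      ((ae_restrict_iff' measurableSet_Ioc).2 (ae_of_all _ fun t ht => hnn t ht.1))).1 hint.2
  have hIoi : ν (Set.Ioi a) = ⊤ := by
    by_contra hne
    have hsub : Set.Ioi (0:ℝ) = Set.Ioc 0 a ∪ Set.Ioi a := (Set.Ioc_union_Ioi_eq_Ioi ha).symm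
    have hle : ν (Set.Ioi (0:ℝ)) ≤ ν (Set.Ioc 0 a) + ν (Set.Ioi a) := by
      rw [hsub]; exact measure_union_le _ _
    rw [happ _ measurableSet_Ioi, htop] at hle
    exact (ENNReal.add_lt_top.2 ⟨hfin, lt_top_iff_ne_top.2 hne⟩).ne_top (top_le_iff.1 hle)
  have hunion : Set.Ioi a = ⋃ k : ℕ, Set.Ioo a (a + k) := by
    ext x
    simp only [Set.mem_Ioi, Set.mem_iUnion, Set.mem_Ioo]
    constructor
    · intro hx
      obtain ⟨k, hk⟩ := exists_nat_gt (x - a)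
      exact ⟨k, hx, by linarith⟩
    · rintro ⟨k, hk, -⟩; exact hk
  have hdir : Directed (· ⊆ ·) (fun k : ℕ => Set.Ioo a (a + k)) := by
    apply Monotone.directed_le
    intro i j hij
    have : (i:ℝ) ≤ j := Nat.cast_le.2 hij
    exact Set.Ioo_subset_Ioo le_rfl (by linarith)
  have hsup : (⨆ k : ℕ, ν (Set.Ioo a (a + k))) = ⊤ := by
    rw [← hdir.measure_iUnion, ← hunion, hIoi]
  have hlt : ENNReal.ofReal M < ⨆ k : ℕ, ν (Set.Ioo a (a + k)) := by
    rw [hsup]; exact ENNReal.ofReal_lt_top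
  obtain ⟨k, hk⟩ := lt_iSup_iff.1 hlt
  refine ⟨max (a + k) (a + gap), le_max_right _ _, ?_⟩
  rw [← happ _ measurableSet_Ioo]
  exact hk.le.trans (measure_mono (Set.Ioo_subset_Ioo le_rfl (le_max_left _ _)))

end Helpers

set_option maxHeartbeats 1000000 in
theorem stmt0 (n : ℕ) (hn : 1 ≤ n) (ζ : ℝ → ℝ) (hζc : Continuous ζ) (hζ0 : ∀ t, 0 ≤ ζ t)
    (hdiv : ∫⁻ t in Set.Ioi (0 : ℝ), ENNReal.ofReal (t ^ (n - 1) * ζ t) = ⊤) :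
    ∃ u : EuclideanSpace ℝ (Fin n) → ℝ,
      ConvexOn ℝ Set.univ u ∧
      Tendsto (fun x => u x / ‖x‖) (cocompact (EuclideanSpace ℝ (Fin n))) atTop ∧
      ∫⁻ x, ENNReal.ofReal (ζ (u x)) = ⊤ := by
  classical
  set h : ℝ → ℝ := fun t => t ^ (n - 1) * ζ t with hh
  have hhc : Continuous h := by fun_prop
  have hhnn : ∀ t, 0 < t → 0 ≤ h t := fun t ht => mul_nonneg (pow_nonneg ht.le _) (hζ0 t)
  -- Step existence, made total
  have step : ∀ a : ℝ, ∀ M gap : ℝ, ∃ c, a + gap ≤ c ∧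
      (0 ≤ a → ENNReal.ofReal M ≤ ∫⁻ t in Set.Ioo a c, ENNReal.ofReal (h t)) := by
    intro a M gap
    by_cases ha : 0 ≤ a
    · obtain ⟨c, hc1, hc2⟩ := exists_step hhc hhnn ha hdiv M gap
      exact ⟨c, hc1, fun _ => hc2⟩
    · exact ⟨a + gap, le_rfl, fun h' => absurd h' ha⟩
  choose F hF1 hF2 using step
  -- the sequence b
  set b : ℕ → ℝ := fun k => Nat.rec 0 (fun k bk => F bk (((k:ℝ)+1)^n) ((k:ℝ)+1)) k with hb
  have hb0 : b 0 = 0 := rfl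
  have hbs : ∀ k : ℕ, b (k+1) = F (b k) (((k:ℝ)+1)^n) ((k:ℝ)+1) := fun k => rfl
  have hgap : ∀ k : ℕ, b k + ((k:ℝ)+1) ≤ b (k+1) := fun k => hbs k ▸ hF1 (b k) _ _
  have hbnn : ∀ k : ℕ, 0 ≤ b k := by
    intro k
    induction k with
    | zero => exact le_of_eq hb0.symm
    | succ k ih =>
      have h1 := hgap k
      have h2 : (0:ℝ) ≤ (k:ℝ)+1 := by positivity
      linarith
  have hmass : ∀ k : ℕ, ENNReal.ofReal (((k:ℝ)+1)^n)
      ≤ ∫⁻ t in Set.Ioo (b k) (b (k+1)), ENNReal.ofReal (h t) := by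
    intro k
    rw [hbs k]
    exact hF2 (b k) (((k:ℝ)+1)^n) ((k:ℝ)+1) (hbnn k)
  -- the sequence A
  set A : ℕ → ℝ := fun k => ∑ j ∈ Finset.range k, (b (j+1) - b j) / ((j:ℝ)+1) with hA
  have hA0 : A 0 = 0 := by simp [hA]
  have hAs : ∀ k : ℕ, A (k+1) = A k + (b (k+1) - b k) / ((k:ℝ)+1) := by
    intro k; simp [hA, Finset.sum_range_succ]
  have hAgap : ∀ k : ℕ, A k + 1 ≤ A (k+1) := by
    intro k
    rw [hAs k]
    have h1 : (0:ℝ) < (k:ℝ)+1 := by positivity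
    have h2 : ((k:ℝ)+1) ≤ b (k+1) - b k := by linarith [hgap k]
    have := (le_div_iff₀ h1).2 (by linarith : 1 * ((k:ℝ)+1) ≤ b (k+1) - b k)
    linarith
  have hAmono : Monotone A := monotone_nat_of_le_succ (fun k => by linarith [hAgap k])
  have hAnn : ∀ k : ℕ, 0 ≤ A k := fun k => hA0 ▸ hAmono (Nat.zero_le k)
  have hAk : ∀ k : ℕ, (k:ℝ) ≤ A k := by
    intro k
    induction k with
    | zero => simp [hA0]
    | succ k ih => push_cast; linarith [hAgap k]
  have hbA : ∀ k : ℕ, b k ≤ ((k:ℝ)+1) * A k := by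
    intro k
    induction k with
    | zero => simp [hb0, hA0]
    | succ k ih =>
      have h1 : (0:ℝ) < (k:ℝ)+1 := by positivity
      have h2 : b (k+1) - b k = ((k:ℝ)+1) * (A (k+1) - A k) := by
        rw [hAs k]; field_simp; ring
      have h3 : b (k+1) ≤ ((k:ℝ)+1) * A (k+1) := by nlinarith
      have h4 : 0 ≤ A (k+1) := hAnn (k+1)
      push_cast
      nlinarith
  -- the supporting lines
  set L : ℕ → ℝ → ℝ := fun k r => b k + ((k:ℝ)+1) * (r - A k) with hL
  have hLnext : ∀ k r, L (k+1) r = L k r + (r - A (k+1)) := by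
    intro k r
    have h1 : (0:ℝ) < (k:ℝ)+1 := by positivity
    have h2 : b (k+1) - b k = ((k:ℝ)+1) * (A (k+1) - A k) := by
      rw [hAs k]; field_simp; ring
    simp only [hL]
    push_cast
    nlinarith [h2]
  have hLmono : ∀ k : ℕ, Monotone (L k) := by
    intro k x y hxy
    simp only [hL]
    have h1 : (0:ℝ) ≤ (k:ℝ)+1 := by positivity
    nlinarith
  -- chains
  have incr : ∀ r : ℝ, ∀ j m, j ≤ m → A m ≤ r → L j r ≤ L m r := by
    intro r j m hjm
    induction m, hjm using Nat.le_induction with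
    | base => intro _; exact le_rfl
    | succ m hjm ih =>
      intro hr
      have h1 : A m ≤ r := le_trans (hAmono (Nat.le_succ m)) hr
      calc L j r ≤ L m r := ih h1
        _ ≤ L (m+1) r := by rw [hLnext]; linarith
  have decr : ∀ r : ℝ, ∀ j m, j ≤ m → r ≤ A j → L m r ≤ L j r := by
    intro r j m hjm hr
    induction m, hjm using Nat.le_induction with
    | base => exact le_rfl
    | succ m hjm ih =>
      have h1 : r ≤ A (m+1) := le_trans hr (hAmono (by omega))
      calc L (m+1) r = L m r + (r - A (m+1)) := hLnext m r
        _ ≤ L m r := by linarith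
        _ ≤ L j r := ih
  have hbdd : ∀ r : ℝ, BddAbove (Set.range fun k => L k r) := by
    intro r
    obtain ⟨K, hK⟩ := exists_nat_ge r
    have hrA : r ≤ A K := le_trans hK (hAk K)
    refine ⟨max (b K + ((K:ℝ)+1) * |r|) (L K r), ?_⟩
    rintro _ ⟨j, rfl⟩
    rcases le_or_gt j K with hj | hj
    · refine le_trans ?_ (le_max_left _ _)
      have hbj : b j ≤ b K := by
        have : ∀ m l, m ≤ l → b m ≤ b l := by
          intro m l hml
          induction l, hml using Nat.le_induction with
          | base => exact le_rfl
          | succ l hml ih =>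
            have := hgap l
            have h1 : (0:ℝ) ≤ (l:ℝ)+1 := by positivity
            linarith
        exact this j K hj
      have hcast : ((j:ℝ)+1) ≤ ((K:ℝ)+1) := by
        have : (j:ℝ) ≤ K := Nat.cast_le.2 hj
        linarith
      simp only [hL]
      rcases le_or_gt (r - A j) 0 with hs | hs
      · have h2 : ((j:ℝ)+1) * (r - A j) ≤ 0 := mul_nonpos_of_nonneg_of_nonpos (by positivity) hs
        have h3 : (0:ℝ) ≤ ((K:ℝ)+1) * |r| := by positivity
        linarith
      · have h2 : r - A j ≤ |r| := by
          have := hAnn j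
          have := le_abs_self r
          linarith
        have h4 : ((j:ℝ)+1) * (r - A j) ≤ ((K:ℝ)+1) * |r| := by nlinarith [abs_nonneg r]
        linarith
    · exact le_trans (decr r K j hj.le hrA) (le_max_right _ _)
  -- the function f
  set f : ℝ → ℝ := fun r => ⨆ k, L k r with hf
  have hfeval : ∀ k : ℕ, ∀ r, A k ≤ r → r ≤ A (k+1) → f r = L k r := by
    intro k r h1 h2
    refine le_antisymm (ciSup_le fun j => ?_) (le_ciSup (hbdd r) k)
    rcases le_or_gt j k with hj | hj
    · exact incr r j k hj h1
    · calc L j r ≤ L (k+1) r := decr r (k+1) j hj h2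
        _ = L k r + (r - A (k+1)) := hLnext k r
        _ ≤ L k r := by linarith
  have hfmono : Monotone f := by
    intro x y hxy
    exact ciSup_le fun k => le_trans (hLmono k hxy) (le_ciSup (hbdd y) k)
  have hfle : ∀ k r, L k r ≤ f r := fun k r => le_ciSup (hbdd r) k
  -- the function u
  refine ⟨fun x => f ‖x‖, ?_, ?_, ?_⟩
  · -- convexity
    refine ⟨convex_univ, ?_⟩
    intro x _ y _ α β hα hβ hαβ
    refine ciSup_le fun k => ?_
    have htri : ‖α • x + β • y‖ ≤ α * ‖x‖ + β * ‖y‖ := by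
      calc ‖α • x + β • y‖ ≤ ‖α • x‖ + ‖β • y‖ := norm_add_le _ _
        _ = α * ‖x‖ + β * ‖y‖ := by rw [norm_smul, norm_smul,
            Real.norm_of_nonneg hα, Real.norm_of_nonneg hβ]
    calc L k ‖α • x + β • y‖ ≤ L k (α * ‖x‖ + β * ‖y‖) := hLmono k htri
      _ = α * L k ‖x‖ + β * L k ‖y‖ := by
          simp only [hL]; linear_combination (((k:ℝ)+1) * A k - b k) * hαβ
      _ ≤ α * f ‖x‖ + β * f ‖y‖ := by
          have h1 := mul_le_mul_of_nonneg_left (hfle k ‖x‖) hα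
          have h2 := mul_le_mul_of_nonneg_left (hfle k ‖y‖) hβ
          linarith
  · -- coercivity
    have hcoer : Tendsto (fun r : ℝ => f r / r) atTop atTop := by
      rw [Filter.tendsto_atTop]
      intro C
      rw [eventually_atTop]
      set k := ⌈C⌉₊ with hk
      have hCk : C ≤ (k:ℝ) := Nat.le_ceil C
      refine ⟨max 1 (((k:ℝ)+1) * A k), fun r hr => ?_⟩
      have hr1 : (1:ℝ) ≤ r := le_trans (le_max_left _ _) hr
      have hr0 : (0:ℝ) < r := by linarith
      have hr2 : ((k:ℝ)+1) * A k ≤ r := le_trans (le_max_right _ _) hr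
      rw [le_div_iff₀ hr0]
      have h1 : L k r ≤ f r := hfle k r
      have h2 : C * r ≤ (k:ℝ) * r := mul_le_mul_of_nonneg_right hCk hr0.le
      have h3 : (k:ℝ) * r = ((k:ℝ)+1) * r - r := by ring
      have h4 : ((k:ℝ)+1) * r - r ≤ ((k:ℝ)+1) * r - ((k:ℝ)+1) * A k := by linarith
      have h5 : ((k:ℝ)+1) * r - ((k:ℝ)+1) * A k ≤ L k r := by
        simp only [hL]
        have := hbnn k
        linarith [mul_sub ((k:ℝ)+1) r (A k)]
      linarith
    exact hcoer.comp tendsto_norm_cocompact_atTop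
  · -- the integral
    haveI : Nonempty (Fin n) := ⟨⟨0, hn⟩⟩
    haveI : Nontrivial (EuclideanSpace ℝ (Fin n)) :=
      inferInstance
    have hfm : Measurable f := hfmono.measurable
    have hgm : Measurable fun r : ℝ => ENNReal.ofReal (ζ (f r)) :=
      ENNReal.measurable_ofReal.comp (hζc.measurable.comp hfm)
    have hpolar := lintegral_norm_polar (volume : Measure (EuclideanSpace ℝ (Fin n))) hgm
    have hdimE : Module.finrank ℝ (EuclideanSpace ℝ (Fin n)) = n := finrank_euclideanSpace_fin
    rw [hpolar, hdimE]
    -- the radial integral is infinite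
    have hkey : ∀ k : ℕ, 1 ≤ ∫⁻ r in Set.Ioo (A k) (A (k+1)),
        ENNReal.ofReal (r ^ (n-1)) * ENNReal.ofReal (ζ (f r)) := by
      intro k
      set s : ℝ := (k:ℝ)+1 with hsdef
      have hs : 0 < s := by positivity
      set c : ℝ := b k - s * A k with hcdef
      have hc : c ≤ 0 := by
        have h1 : b k ≤ s * A k := by rw [hsdef]; exact hbA k
        simp only [hcdef]; linarith
      have hLeq : ∀ r, L k r = s * r + c := by
        intro r; simp only [hL, hsdef, hcdef]; ring
      have hend1 : s * A k + c = b k := by simp only [hcdef]; ring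
      have hend2 : s * A (k+1) + c = b (k+1) := by
        have h2 : b (k+1) - b k = s * (A (k+1) - A k) := by
          rw [hAs k]; simp only [hsdef]; field_simp; ring
        simp only [hcdef]; linarith
      have haff := lint_affine (c := c) hs (G := fun t => ENNReal.ofReal (h t))
        (by fun_prop) (A k) (A (k+1))
      rw [hend1, hend2] at haff
      -- pointwise bound
      have hpt : ∀ r ∈ Set.Ioo (A k) (A (k+1)),
          ENNReal.ofReal (h (s*r+c))
            ≤ ENNReal.ofReal (s ^ (n-1)) *
              (ENNReal.ofReal (r ^ (n-1)) * ENNReal.ofReal (ζ (f r))) := by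
        intro r hr
        have hfr : f r = s * r + c := by
          rw [hfeval k r hr.1.le hr.2.le, hLeq]
        have ht0 : 0 ≤ s * r + c := by
          have : b k < s * r + c := by
            rw [← hend1]
            have := hr.1
            nlinarith
          linarith [hbnn k]
        have hr0 : 0 ≤ r := le_trans (hAnn k) hr.1.le
        have hts : s * r + c ≤ s * r := by linarith
        have hreal : h (s*r+c) ≤ s ^ (n-1) * (r ^ (n-1) * ζ (f r)) := by
          have hpow : (s*r+c) ^ (n-1) ≤ (s*r) ^ (n-1) := pow_le_pow_left₀ ht0 hts _
          have hmul : (s*r) ^ (n-1) = s ^ (n-1) * r ^ (n-1) := mul_pow s r (n-1)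
          have hz := hζ0 (s*r+c)
          have heq : h (s*r+c) = (s*r+c) ^ (n-1) * ζ (s*r+c) := rfl
          rw [heq, hfr]
          calc (s*r+c) ^ (n-1) * ζ (s*r+c)
              ≤ (s ^ (n-1) * r ^ (n-1)) * ζ (s*r+c) := by
                refine mul_le_mul_of_nonneg_right ?_ hz
                rw [← hmul]; exact hpow
            _ = s ^ (n-1) * (r ^ (n-1) * ζ (s*r+c)) := by ring
        calc ENNReal.ofReal (h (s*r+c))
            ≤ ENNReal.ofReal (s ^ (n-1) * (r ^ (n-1) * ζ (f r))) := ENNReal.ofReal_le_ofReal hreal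
          _ = ENNReal.ofReal (s ^ (n-1)) *
              (ENNReal.ofReal (r ^ (n-1)) * ENNReal.ofReal (ζ (f r))) := by
              rw [ENNReal.ofReal_mul (by positivity), ENNReal.ofReal_mul (by positivity)]
      have hchain : ENNReal.ofReal (s^n)
          ≤ ENNReal.ofReal (s^n) * ∫⁻ r in Set.Ioo (A k) (A (k+1)),
              ENNReal.ofReal (r ^ (n-1)) * ENNReal.ofReal (ζ (f r)) := by
        calc ENNReal.ofReal (s^n)
            ≤ ∫⁻ t in Set.Ioo (b k) (b (k+1)), ENNReal.ofReal (h t) := by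
              have := hmass k
              simpa [hsdef] using this
          _ = ENNReal.ofReal s * ∫⁻ r in Set.Ioo (A k) (A (k+1)),
              ENNReal.ofReal (h (s*r+c)) := haff
          _ ≤ ENNReal.ofReal s * ∫⁻ r in Set.Ioo (A k) (A (k+1)),
              ENNReal.ofReal (s ^ (n-1)) *
                (ENNReal.ofReal (r ^ (n-1)) * ENNReal.ofReal (ζ (f r))) := by
              exact mul_le_mul_right (setLIntegral_mono (by fun_prop) hpt) _
          _ = ENNReal.ofReal (s^n) * ∫⁻ r in Set.Ioo (A k) (A (k+1)),
              ENNReal.ofReal (r ^ (n-1)) * ENNReal.ofReal (ζ (f r)) := by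
              rw [lintegral_const_mul _ (by fun_prop), ← mul_assoc,
                ← ENNReal.ofReal_mul hs.le]
              congr 2
              rw [← pow_succ']
              congr 1
              omega
      have hne0 : ENNReal.ofReal (s^n) ≠ 0 := by
        simp only [ne_eq, ENNReal.ofReal_eq_zero, not_le]
        positivity
      have hnetop : ENNReal.ofReal (s^n) ≠ ⊤ := ENNReal.ofReal_ne_top
      rw [← ENNReal.mul_le_mul_iff_right hne0 hnetop, mul_one]
      exact hchain
    -- sum over disjoint intervals
    have hdisj : Pairwise (Function.onFun Disjoint fun k : ℕ => Set.Ioo (A k) (A (k+1))) := by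
      have key : ∀ i j : ℕ, i < j → Disjoint (Set.Ioo (A i) (A (i+1))) (Set.Ioo (A j) (A (j+1))) := by
        intro i j hij
        have hle : A (i+1) ≤ A j := hAmono hij
        refine Set.disjoint_left.2 ?_
        rintro r ⟨-, hr2⟩ ⟨hr3, -⟩
        linarith
      intro i j hij
      rcases lt_or_gt_of_ne hij with hij' | hij'
      · exact key i j hij'
      · exact (key j i hij').symm
    have hsub : (⋃ k : ℕ, Set.Ioo (A k) (A (k+1))) ⊆ Set.Ioi 0 := by
      rintro r ⟨S, ⟨k, rfl⟩, hr⟩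
      exact lt_of_le_of_lt (hAnn k) hr.1
    have htot : ∫⁻ r in Set.Ioi (0:ℝ),
        ENNReal.ofReal (r ^ (n-1)) * ENNReal.ofReal (ζ (f r)) = ⊤ := by
      rw [← top_le_iff]
      calc (⊤ : ℝ≥0∞) = ∑' _ : ℕ, (1:ℝ≥0∞) :=
            (ENNReal.tsum_const_eq_top_of_ne_zero one_ne_zero).symm
        _ ≤ ∑' k : ℕ, ∫⁻ r in Set.Ioo (A k) (A (k+1)),
              ENNReal.ofReal (r ^ (n-1)) * ENNReal.ofReal (ζ (f r)) :=
            ENNReal.tsum_le_tsum hkey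
        _ = ∫⁻ r in ⋃ k : ℕ, Set.Ioo (A k) (A (k+1)),
              ENNReal.ofReal (r ^ (n-1)) * ENNReal.ofReal (ζ (f r)) :=
            (lintegral_iUnion (fun k => measurableSet_Ioo) hdisj _).symm
        _ ≤ _ := lintegral_mono_set hsub
    rw [htot]
    have hne : (volume : Measure (EuclideanSpace ℝ (Fin n))).toSphere Set.univ ≠ 0 := by
      rw [Measure.toSphere_apply_univ]
      refine mul_ne_zero ?_ ?_
      · simp only [ne_eq, Nat.cast_eq_zero, hdimE]
        omega
      · exact (measure_ball_pos volume (0 : EuclideanSpace ℝ (Fin n)) one_pos).ne'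
    exact ENNReal.mul_top hne
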